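/- The Laurent polynomial ring K[z, z⁻¹] over a field K has Bass stable rank equal to 2. -/

import Mathlib

open scoped BigOperators

variable {R : Type*}

/-- A column is unimodular if its entries admit a left Bezout relation summing to `1`. -/
def Unimodular [Ring R] {m : ℕ} (b : Fin m → R) : Prop :=
  ∃ a : Fin m → R, ∑ i, a i * b i = 1

/-- An `(n+1)`-column is reducible if adding left multiples of the last entry to the first
`n` entries yields a unimodular `n`-column. -/
def Reducible [Ring R] {n : ℕ} (b : Fin (n + 1) → R) : Prop :=
  ∃ v : Fin n → R, Unimodular (fun i : Fin n => b i.castSucc + v i * b (Fin.last n))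

/-- The stable range condition: every unimodular column of length `> n` is reducible. -/
def SRleq (R : Type*) [Ring R] (n : ℕ) : Prop :=
  ∀ m : ℕ, n ≤ m → ∀ b : Fin (m + 1) → R, Unimodular b → Reducible b

/-- The Bass stable rank, as an element of `ℕ∞`. -/
noncomputable def sr (R : Type*) [Ring R] : ℕ∞ :=
  sInf {c : ℕ∞ | ∃ n : ℕ, c = n ∧ SRleq R n}

/-- Elementary matrices (transvections). -/
def IsElemMat [Ring R] {t : ℕ} (M : Matrix (Fin t) (Fin t) R) : Prop :=
  ∃ (i j : Fin t) (c : R), i ≠ j ∧ M = 1 + Matrix.single i j c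

/-- `ERleq R k` : for every `t ≥ k + 1`, the elementary group `E_t(R)` acts transitively on
unimodular `t`-columns. -/
def ERleq (R : Type*) [Ring R] (k : ℕ) : Prop :=
  ∀ t : ℕ, k + 1 ≤ t → ∀ b c : Fin t → R, Unimodular b → Unimodular c →
    ∃ L : List (Matrix (Fin t) (Fin t) R), (∀ M ∈ L, IsElemMat M) ∧ L.prod.mulVec b = c

/-- The elementary rank, as an element of `ℕ∞`. -/
noncomputable def er (R : Type*) [Ring R] : ℕ∞ :=
  sInf {c : ℕ∞ | ∃ k : ℕ, c = k ∧ ERleq R k}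

/-- Vaserstein's `I`-unimodular columns relative to a two-sided ideal `I` of `R`:
the first entry is congruent to `1` mod `I`, the others lie in `I`, and there is a Bezout
relation of the same shape. -/
def RelUnimodular [Ring R] (I : TwoSidedIdeal R) {m : ℕ} (b : Fin (m + 1) → R) : Prop :=
  b 0 - 1 ∈ I ∧ (∀ i, i ≠ 0 → b i ∈ I) ∧
    ∃ a : Fin (m + 1) → R, (a 0 - 1 ∈ I) ∧ (∀ i, i ≠ 0 → a i ∈ I) ∧ ∑ i, a i * b i = 1

def RelReducible [Ring R] (I : TwoSidedIdeal R) {m : ℕ} (b : Fin (m + 2) → R) : Prop :=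
  ∃ v : Fin (m + 1) → R, (∀ i, v i ∈ I) ∧
    RelUnimodular I (fun i : Fin (m + 1) => b i.castSucc + v i * b (Fin.last (m + 1)))

/-- Relative (Vaserstein) stable rank `≤ n` for a two-sided ideal: every `I`-unimodular
column of length at least `n + 1` is reducible. -/
def RelSRleq [Ring R] (I : TwoSidedIdeal R) (n : ℕ) : Prop :=
  ∀ m : ℕ, n ≤ m + 1 → ∀ b : Fin (m + 2) → R, RelUnimodular I b → RelReducible I b

/-- The relative stable rank of a two-sided ideal, as an element of `ℕ∞`. -/
noncomputable def relSr [Ring R] (I : TwoSidedIdeal R) : ℕ∞ :=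
  sInf {c : ℕ∞ | ∃ n : ℕ, c = n ∧ RelSRleq I n}


section SRTwoAux

open Polynomial LaurentPolynomial

namespace SRTwo

instance instDomain (K : Type*) [Field K] : IsDomain (LaurentPolynomial K) :=
  NoZeroDivisors.to_isDomain _

theorem laurent_T_neg_cancel {K : Type*} [Field K] (n : ℕ) :
    (T (n : ℤ) : LaurentPolynomial K) * T (-(n:ℤ)) = 1 := by
  rw [← T_add]; simp

instance instPIR (K : Type*) [Field K] : IsPrincipalIdealRing (LaurentPolynomial K) := by
  constructor
  intro I
  set J : Ideal K[X] := I.comap (toLaurent : K[X] →+* LaurentPolynomial K) with hJ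
  obtain ⟨g, hg⟩ : Submodule.IsPrincipal J := IsPrincipalIdealRing.principal J
  refine ⟨toLaurent g, le_antisymm ?_ ?_⟩
  · intro f hf
    obtain ⟨n, f', hf'⟩ := exists_T_pow f
    have hmem : f' ∈ J := by
      simp only [hJ, Ideal.mem_comap, hf']
      exact I.mul_mem_right _ hf
    rw [hg] at hmem
    obtain ⟨h, rfl⟩ : (g : K[X]) ∣ f' := by
      rwa [Ideal.submodule_span_eq, Ideal.mem_span_singleton] at hmem
    have : f = toLaurent g * (toLaurent h * T (-(n:ℤ))) := by
      have := congrArg (· * T (-(n:ℤ))) hf'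
      simp only [map_mul] at this ⊢
      rw [mul_assoc f (T (n:ℤ)) (T (-(n:ℤ))), laurent_T_neg_cancel n, mul_one] at this
      rw [← this]; ring
    rw [this, Ideal.submodule_span_eq]
    exact Ideal.mul_mem_right _ _ (Ideal.subset_span rfl)
  · rw [Ideal.submodule_span_eq, Ideal.span_le, Set.singleton_subset_iff]
    have : g ∈ J := by rw [hg, Ideal.submodule_span_eq]; exact Ideal.subset_span rfl
    exact this


variable {A : Type*} [CommRing A] [IsDomain A] [IsPrincipalIdealRing A]

/-- The increasing chain of "colon" ideals `(d : bⁿ)`. -/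
def chain (d b : A) (n : ℕ) : Ideal A where
  carrier := {x | d ∣ x * b ^ n}
  add_mem' := by
    intro x y hx hy
    simpa [add_mul] using dvd_add hx hy
  zero_mem' := by simp
  smul_mem' := by
    intro c x hx
    simp only [Set.mem_setOf_eq, smul_eq_mul, mul_assoc]
    exact hx.mul_left c

theorem chain_mono (d b : A) : Monotone (chain d b) := by
  apply monotone_nat_of_le_succ
  intro n x hx
  have : d ∣ x * b ^ n := hx
  show d ∣ x * b ^ (n + 1)
  rw [pow_succ, ← mul_assoc]
  exact this.mul_right b

/-- Core lemma : `R/(d)` has stable rank one, concretely. -/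
theorem core (d b c : A) (hd : d ≠ 0)
    (h : ∃ x y z, x * d + y * b + z * c = 1) :
    ∃ v α β, α * d + β * (b + v * c) = 1 := by
  -- stabilize the chain
  obtain ⟨N, hN⟩ := monotone_stabilizes_iff_noetherian.mpr
    (PrincipalIdealRing.isNoetherianRing (R := A))
    ⟨chain d b, chain_mono d b⟩
  have hprinc : (chain d b N).IsPrincipal := IsPrincipalIdealRing.principal _
  set v := Submodule.IsPrincipal.generator (chain d b N) with hv
  have hv1 : d ∣ v * b ^ N := Submodule.IsPrincipal.generator_mem (chain d b N)
  have hvdvd : ∀ x ∈ chain d b N, v ∣ x := fun x hx =>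
    ((Submodule.IsPrincipal.mem_iff_generator_dvd (chain d b N)).mp hx)
  have hdmem : d ∈ chain d b N := Dvd.dvd.mul_right dvd_rfl _
  have hvne : v ≠ 0 := by
    intro h0
    obtain ⟨t, ht⟩ := hvdvd d hdmem
    exact hd (by rw [ht, h0, zero_mul])
  refine ⟨v, ?_⟩
  -- consider the ideal (d, b + v*c)
  have hpr : (Ideal.span {d, b + v * c}).IsPrincipal := IsPrincipalIdealRing.principal _
  set e := Submodule.IsPrincipal.generator (Ideal.span {d, b + v * c}) with he
  have hed : e ∣ d := (Submodule.IsPrincipal.mem_iff_generator_dvd _).mp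
    (Ideal.subset_span (by simp))
  have hebc : e ∣ b + v * c := (Submodule.IsPrincipal.mem_iff_generator_dvd _).mp
    (Ideal.subset_span (by simp))
  by_cases hu : IsUnit e
  · have : (1 : A) ∈ Ideal.span {d, b + v * c} := by
      rw [Submodule.IsPrincipal.mem_iff_generator_dvd]
      exact isUnit_iff_dvd_one.mp hu
    obtain ⟨α, β, hab⟩ := Ideal.mem_span_pair.mp this
    exact ⟨α, β, hab⟩
  · exfalso
    have hene : e ≠ 0 := fun h0 => hd (by simpa [h0] using hed)
    obtain ⟨p, hp_irr, hpe⟩ := WfDvdMonoid.exists_irreducible_factor hu hene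
    have hp : Prime p := UniqueFactorizationMonoid.irreducible_iff_prime.mp hp_irr
    have hpd : p ∣ d := hpe.trans hed
    have hpbc : p ∣ b + v * c := hpe.trans hebc
    obtain ⟨x, y, z, hxyz⟩ := h
    by_cases hpb : p ∣ b
    · -- p ∣ b : then p ∣ v*c, and p ∤ c, so p ∣ v ; contradiction via stabilization
      have hpvc : p ∣ v * c := by
        have := dvd_sub hpbc hpb
        simpa using this
      rcases hp.dvd_mul.mp hpvc with hpv | hpc
      · obtain ⟨v', hv'⟩ := hpv
        obtain ⟨b', hb'⟩ := hpb
        have hv'mem : v' ∈ chain d b (N + 1) := by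
          show d ∣ v' * b ^ (N + 1)
          have : v' * b ^ (N + 1) = b' * (v * b ^ N) := by
            rw [hv', hb', pow_succ]; ring
          rw [this]
          exact hv1.mul_left b'
        have hNN : chain d b N = chain d b (N+1) := hN (N+1) (Nat.le_succ N)
        rw [← hNN] at hv'mem
        obtain ⟨t, ht⟩ := hvdvd v' hv'mem
        -- v = p * v', v ∣ v'
        have hv'ne : v' ≠ 0 := fun h0 => hvne (by rw [hv', h0, mul_zero])
        have : v' * 1 = v' * (t * p) := by
          calc v' * 1 = v' := by ring
          _ = v * t := ht
          _ = v' * (t * p) := by rw [hv']; ring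
        have h1 : (1 : A) = t * p := mul_left_cancel₀ hv'ne this
        exact hp.not_isUnit (IsUnit.of_mul_eq_one (a := p) t (by rw [mul_comm]; exact h1.symm))
      · -- p ∣ c, p ∣ b, p ∣ d : contradict bezout
        have : p ∣ (1 : A) := by
          rw [← hxyz]
          exact dvd_add (dvd_add (hpd.mul_left x) (hpb.mul_left y)) (hpc.mul_left z)
        exact hp.not_isUnit (isUnit_of_dvd_one this)
    · -- p ∤ b : p ∣ v * b^N forces p ∣ v, then p ∣ b, contradiction
      have hpvbN : p ∣ v * b ^ N := hpd.trans hv1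
      have hpv : p ∣ v := by
        rcases hp.dvd_mul.mp hpvbN with h1 | h1
        · exact h1
        · exact absurd (hp.dvd_of_dvd_pow h1) hpb
      have : p ∣ b := by
        have := dvd_sub hpbc (hpv.mul_right c)
        simpa using this
      exact hpb this



theorem srleq_two (A : Type*) [CommRing A] [IsDomain A] [IsPrincipalIdealRing A] :
    SRleq A 2 := by
  intro m hm b ⟨a, ha⟩
  have h0m : 0 < m := by omega
  have h1m : 1 < m := by omega
  rw [Fin.sum_univ_castSucc] at ha
  set c := b (Fin.last m) with hc
  by_cases hB : ∀ i : Fin m, b i.castSucc = 0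
  · -- all leading entries vanish, so c is a unit
    have hac : a (Fin.last m) * c = 1 := by
      have : ∑ i : Fin m, a i.castSucc * b i.castSucc = 0 := by
        apply Finset.sum_eq_zero; intro i _; rw [hB i, mul_zero]
      rw [this, zero_add] at ha; exact ha
    refine ⟨fun i => if i = ⟨0, h0m⟩ then a (Fin.last m) else 0,
           fun i => if i = ⟨0, h0m⟩ then 1 else 0, ?_⟩
    have hb0 : b (⟨0, h0m⟩ : Fin m).castSucc = 0 := hB _
    have hb00 : b 0 = 0 := by simpa using hb0
    rw [Fintype.sum_eq_single (⟨0, h0m⟩ : Fin m)]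
    · simpa [hb0, hb00] using hac
    · intro j hj; simp [hj]
  · push_neg at hB
    obtain ⟨j, hj⟩ := hB
    set j' : Fin m := if j = ⟨0, h0m⟩ then ⟨1, h1m⟩ else ⟨0, h0m⟩ with hj'def
    have hjj' : j ≠ j' := by
      by_cases h : j = ⟨0, h0m⟩
      · rw [hj'def, if_pos h, h]
        intro hcon; exact absurd (congrArg Fin.val hcon) (by simp)
      · rw [hj'def, if_neg h]; exact h
    set g : Fin m → A := fun i => if i = j' then 0 else b i.castSucc with hg
    set I : Ideal A := Ideal.span (Set.range g) with hI
    have hIP : I.IsPrincipal := IsPrincipalIdealRing.principal I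
    set d := Submodule.IsPrincipal.generator I with hd
    have hgmem : ∀ i, g i ∈ I := fun i => Ideal.subset_span ⟨i, rfl⟩
    have hgd : ∀ i, d ∣ g i := fun i =>
      (Submodule.IsPrincipal.mem_iff_generator_dvd I).mp (hgmem i)
    have hdne : d ≠ 0 := by
      intro h0
      apply hj
      have h1 := hgd j
      rw [h0] at h1
      have h2 : g j = 0 := zero_dvd_iff.mp h1
      have h3 : g j = b j.castSucc := by simp [hg, hjj']
      rw [← h3, h2]
    choose e he using hgd
    -- bezout relation x*d + y*(b j'.castSucc) + z*c = 1
    have hbez : ∃ x y z, x * d + y * b j'.castSucc + z * c = 1 := by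
      refine ⟨∑ i : Fin m, a i.castSucc * e i, a j'.castSucc, a (Fin.last m), ?_⟩
      have e1 : (∑ i : Fin m, a i.castSucc * e i) * d = ∑ i : Fin m, a i.castSucc * g i := by
        rw [Finset.sum_mul]
        apply Finset.sum_congr rfl
        intro i _
        rw [mul_assoc, mul_comm (e i) d, ← he i]
      have e2 : ∑ i : Fin m, a i.castSucc * g i + a j'.castSucc * b j'.castSucc
          = ∑ i : Fin m, a i.castSucc * b i.castSucc := by
        rw [← Finset.sum_erase_add _ _ (Finset.mem_univ j'),
            ← Finset.sum_erase_add _ (fun i : Fin m => a i.castSucc * b i.castSucc)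
              (Finset.mem_univ j')]
        have : g j' = 0 := by rw [hg]; simp
        rw [this, mul_zero, add_zero]
        congr 1
        apply Finset.sum_congr rfl
        intro i hi
        have hine : i ≠ j' := Finset.ne_of_mem_erase hi
        rw [hg]; simp [hine]
      rw [e1]
      calc ∑ i : Fin m, a i.castSucc * g i + a j'.castSucc * b j'.castSucc
            + a (Fin.last m) * c
          = (∑ i : Fin m, a i.castSucc * g i + a j'.castSucc * b j'.castSucc)
            + a (Fin.last m) * c := by ring
        _ = ∑ i : Fin m, a i.castSucc * b i.castSucc + a (Fin.last m) * c := by rw [e2]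
        _ = 1 := ha
    obtain ⟨v, α, β, hcore⟩ := core d (b j'.castSucc) c hdne hbez
    -- express d as a combination of the g i
    have hdmem : d ∈ I := Submodule.IsPrincipal.generator_mem I
    rw [hI, Ideal.submodule_span_eq.symm] at hdmem
    obtain ⟨co, hco⟩ := (Submodule.mem_span_range_iff_exists_fun A).mp hdmem
    simp only [smul_eq_mul] at hco
    refine ⟨fun i => if i = j' then v else 0,
           fun i => if i = j' then β else α * co i, ?_⟩
    have key : ∀ i ∈ Finset.univ.erase j',
        (if i = j' then β else α * co i) *
          (b i.castSucc + (if i = j' then v else 0) * c) = α * (co i * g i) := by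
      intro i hi
      have hine : i ≠ j' := Finset.ne_of_mem_erase hi
      rw [if_neg hine, if_neg hine, zero_mul, add_zero, hg]
      simp only [if_neg hine]
      ring
    rw [← Finset.sum_erase_add _ _ (Finset.mem_univ j'), Finset.sum_congr rfl key,
        ← Finset.mul_sum]
    have herase : ∑ i ∈ Finset.univ.erase j', co i * g i = d := by
      rw [← hco, ← Finset.sum_erase_add _ (fun i => co i * g i) (Finset.mem_univ j')]
      have : g j' = 0 := by rw [hg]; simp
      rw [this, mul_zero, add_zero]
    rw [herase]
    simp only [eq_self_iff_true, if_true]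
    linear_combination hcore


/-- Units of `K[z,z⁻¹]` are `c • zⁿ`. -/
theorem laurent_isUnit {K : Type*} [Field K] {f : LaurentPolynomial K}
    (hf : IsUnit f) : ∃ (c : K) (n : ℤ), c ≠ 0 ∧ f = LaurentPolynomial.C c * T n := by
  obtain ⟨u, rfl⟩ := hf
  have hmul : (u : LaurentPolynomial K) * ↑u⁻¹ = 1 := u.mul_inv
  obtain ⟨a, p, hp⟩ := exists_T_pow (u : LaurentPolynomial K)
  obtain ⟨b, q, hq⟩ := exists_T_pow ((u⁻¹ : _) : LaurentPolynomial K)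
  have hre : toLaurent p * toLaurent q
      = ((u : LaurentPolynomial K) * ((u⁻¹ : (LaurentPolynomial K)ˣ) : LaurentPolynomial K))
        * (T (a:ℤ) * T (b:ℤ)) := by
    rw [hp, hq]; ring
  rw [hmul, one_mul] at hre
  have hpq : p * q = X ^ (a + b) := by
    apply toLaurent_injective
    rw [map_mul, hre, toLaurent_X_pow]
    push_cast
    rw [T_add]
  have hpdvd : p ∣ X ^ (a + b) := ⟨q, hpq.symm⟩
  obtain ⟨i, hi, hassoc⟩ := (dvd_prime_pow Polynomial.prime_X (a + b)).mp hpdvd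
  obtain ⟨w, hw⟩ := hassoc.symm
  obtain ⟨r, hr, hrw⟩ := Polynomial.isUnit_iff.mp w.isUnit
  refine ⟨r, (i : ℤ) - a, hr.ne_zero, ?_⟩
  have hu : (u : LaurentPolynomial K) = toLaurent p * T (-(a : ℤ)) := by
    rw [hp, mul_assoc, ← T_add]
    simp
  rw [hu, ← hw, ← hrw, map_mul, toLaurent_X_pow, toLaurent_C, T_sub]
  ring

/-- Pascal-type steps. -/
theorem choose2_step (m : ℕ) : (m+4).choose 2 = m.choose 2 + 4*m + 6 := by
  simp [Nat.choose_succ_succ, Nat.choose_one_right]; omega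

theorem choose3_step (m : ℕ) : (m+4).choose 3 = m.choose 3 + 4*(m.choose 2) + 6*m + 4 := by
  simp [Nat.choose_succ_succ, Nat.choose_one_right]; omega

theorem choose2_mod (n : ℕ) : n.choose 2 % 2 = (n % 4).choose 2 % 2 := by
  have key : ∀ q r, (4*q + r).choose 2 % 2 = r.choose 2 % 2 := by
    intro q
    induction q with
    | zero => simp
    | succ k ih =>
      intro r
      have h1 : 4*(k+1) + r = (4*k + r) + 4 := by ring
      rw [h1, choose2_step]
      have := ih r
      omega
  conv_lhs => rw [← Nat.div_add_mod n 4]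
  exact key (n/4) (n%4)

theorem choose3_mod (n : ℕ) : n.choose 3 % 2 = (n % 4).choose 3 % 2 := by
  have key : ∀ q r, (4*q + r).choose 3 % 2 = r.choose 3 % 2 := by
    intro q
    induction q with
    | zero => simp
    | succ k ih =>
      intro r
      have h1 : 4*(k+1) + r = (4*k + r) + 4 := by ring
      rw [h1, choose3_step]
      have h2 := ih r
      have h3 := choose2_mod (4*k+r)
      omega
  conv_lhs => rw [← Nat.div_add_mod n 4]
  exact key (n/4) (n%4)

theorem nat_contradiction (a b : ℕ) (h1 : a % 2 = b % 2)
    (h2 : a.choose 2 % 2 = (b.choose 2 + 1) % 2)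
    (h3 : a.choose 3 % 2 = (b.choose 3 + b + 1) % 2) : False := by
  have c2a := choose2_mod a
  have c2b := choose2_mod b
  have c3a := choose3_mod a
  have c3b := choose3_mod b
  have ha4 : a % 4 < 4 := by omega
  have hb4 : b % 4 < 4 := by omega
  have h1' : a % 4 % 2 = b % 4 % 2 := by omega
  have h2' : (a % 4).choose 2 % 2 = ((b % 4).choose 2 + 1) % 2 := by omega
  have h3' : (a % 4).choose 3 % 2 = ((b % 4).choose 3 + b % 4 + 1) % 2 := by omega
  clear h1 h2 h3 c2a c2b c3a c3b
  generalize a % 4 = x at ha4 h1' h2' h3'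
  generalize b % 4 = y at hb4 h1' h2' h3'
  interval_cases x <;> interval_cases y <;> revert h1' h2' h3' <;> decide

/-- The key arithmetic contradiction over any field. -/
theorem field_contradiction (K : Type*) [Field K] (a b : ℕ)
    (h1 : (a : K) = b)
    (h2 : (a.choose 2 : K) = b.choose 2 + 1)
    (h3 : (a.choose 3 : K) = b.choose 3 + b + 1) : False := by
  have sq : ∀ n : ℕ, 2 * n.choose 2 + n = n^2 := by
    intro n
    induction n with
    | zero => simp
    | succ k ih => simp [Nat.choose_succ_succ, Nat.choose_one_right]; ring_nf; ring_nf at ih; omega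
  by_cases h2K : (2 : K) = 0
  · -- characteristic 2
    have hchar : ringChar K = 2 := by
      have hdvd : ringChar K ∣ 2 := ringChar.dvd (by exact_mod_cast h2K)
      rcases (Nat.dvd_prime Nat.prime_two).mp hdvd with h | h
      · exact absurd h (CharP.ringChar_ne_one (R := K))
      · exact h
    haveI : CharP K 2 := hchar ▸ ringChar.charP K
    have e1 : a ≡ b [MOD 2] := (CharP.natCast_eq_natCast K 2).mp h1
    have e2 : a.choose 2 ≡ b.choose 2 + 1 [MOD 2] := by
      refine (CharP.natCast_eq_natCast K 2).mp ?_
      push_cast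
      exact h2
    have e3 : a.choose 3 ≡ b.choose 3 + b + 1 [MOD 2] := by
      refine (CharP.natCast_eq_natCast K 2).mp ?_
      push_cast
      exact h3
    exact nat_contradiction a b e1 e2 e3
  · -- characteristic ≠ 2 : use the square identity
    have ha : (2:K) * (a.choose 2 : K) + a = (a:K)^2 := by
      have := sq a
      exact_mod_cast congrArg (fun n : ℕ => (n : K)) this
    have hb : (2:K) * (b.choose 2 : K) + b = (b:K)^2 := by
      have := sq b
      exact_mod_cast congrArg (fun n : ℕ => (n : K)) this
    apply h2K
    have : (2:K) * ((b.choose 2 : K) + 1) + a = (a:K)^2 := by rw [← h2]; exact ha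
    rw [h1] at this
    linear_combination this - hb


noncomputable def pp (K : Type*) [Field K] : K[X] := 1 + (X - 1)^2 + (X - 1)^3
noncomputable def qq (K : Type*) [Field K] : K[X] := (X - 1)^4

theorem key_dvd {K : Type*} [Field K] (c : K) (t bexp : ℕ)
    (hdvd : (qq K) ∣ (Polynomial.C c * X ^ t - pp K * X ^ bexp)) : False := by
  have hmap := map_dvd (Polynomial.aeval (X + 1 : K[X])) hdvd
  have e1 : (Polynomial.aeval (X + 1 : K[X])) (qq K) = X^4 := by
    simp [qq]
  have e2 : (Polynomial.aeval (X + 1 : K[X])) (Polynomial.C c * X ^ t - pp K * X ^ bexp)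
      = Polynomial.C c * (1+X)^t
        - ((1+X)^bexp + (1+X)^bexp * X^2 + (1+X)^bexp * X^3) := by
    simp [pp, Polynomial.algebraMap_eq]
    ring
  rw [e1, e2] at hmap
  have hco := Polynomial.X_pow_dvd_iff.mp hmap
  have E0 := hco 0 (by norm_num)
  have E1 := hco 1 (by norm_num)
  have E2 := hco 2 (by norm_num)
  have E3 := hco 3 (by norm_num)
  simp only [Polynomial.coeff_sub, Polynomial.coeff_add, Polynomial.coeff_C_mul,
    Polynomial.coeff_mul_X_pow', Polynomial.coeff_one_add_X_pow,
    Nat.choose_zero_right, Nat.choose_one_right, Nat.cast_one] at E0 E1 E2 E3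
  norm_num at E0 E1 E2 E3
  have hc1 : c = 1 := by linear_combination E0
  rw [hc1] at E1 E2 E3
  apply field_contradiction K t bexp
  · linear_combination E1
  · linear_combination E2
  · linear_combination E3

theorem not_reducible (K : Type*) [Field K] :
    ¬ Reducible (R := LaurentPolynomial K) ![toLaurent (pp K), toLaurent (qq K)] := by
  rintro ⟨v, a, hsum⟩
  rw [Fin.sum_univ_one] at hsum
  have hsum' : a 0 * (toLaurent (pp K) + v 0 * toLaurent (qq K)) = 1 := by
    have hcast : ((0 : Fin 1).castSucc : Fin 2) = 0 := rfl
    have hl : (Fin.last (Nat.succ 0) : Fin 2) = 1 := rfl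
    simpa [hcast, hl] using hsum
  have hunit : IsUnit (toLaurent (pp K) + v 0 * toLaurent (qq K)) :=
    IsUnit.of_mul_eq_one (a 0) (by linear_combination hsum')
  obtain ⟨c, n, hc, hEq⟩ := laurent_isUnit hunit
  obtain ⟨k, w, hw⟩ := exists_T_pow (v 0)
  set s : ℕ := n.natAbs with hs
  have hnn : (0:ℤ) ≤ n + k + s := by omega
  set t : ℕ := (n + k + s).toNat with ht
  have htZ : (t : ℤ) = n + k + s := Int.toNat_of_nonneg hnn
  have hpoly : pp K * X^(k+s) + (w * X^s) * qq K = Polynomial.C c * X^t := by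
    apply toLaurent_injective
    rw [map_add, map_mul, map_mul, map_mul, map_mul, toLaurent_X_pow, toLaurent_X_pow,
      toLaurent_X_pow, toLaurent_C]
    rw [hw]
    have step : toLaurent (pp K) * T ((k+s : ℕ) : ℤ)
        + v 0 * T (k : ℤ) * T ((s:ℕ) : ℤ) * toLaurent (qq K)
        = (toLaurent (pp K) + v 0 * toLaurent (qq K)) * T ((k+s : ℕ) : ℤ) := by
      push_cast
      rw [T_add]
      ring
    rw [step, hEq, mul_assoc, ← T_add]
    congr 1
    rw [htZ]
    push_cast
    ring
  apply key_dvd c t (k+s)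
  exact ⟨w * X^s, by linear_combination -hpoly⟩


theorem unimodular_pair (K : Type*) [Field K] :
    Unimodular (R := LaurentPolynomial K) ![toLaurent (pp K), toLaurent (qq K)] := by
  refine ⟨![toLaurent (1 - (X-1)^2*(1+(X-1))), toLaurent ((1+(X-1))^2)], ?_⟩
  rw [Fin.sum_univ_two]
  simp only [Matrix.cons_val_zero, Matrix.cons_val_one, Matrix.head_cons]
  rw [← map_mul, ← map_mul, ← map_add]
  have hident : (1 - (X-1)^2*(1+(X-1))) * pp K + (1+(X-1))^2 * qq K = (1 : K[X]) := by
    rw [pp, qq]; ring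
  rw [hident, map_one]

end SRTwo

end SRTwoAux

/-- The Laurent polynomial ring `K[z, z⁻¹]` over a field has Bass stable rank `2`. -/
theorem sr_laurent_eq_two (K : Type*) [Field K] :
    sr (LaurentPolynomial K) = 2 := by
  apply le_antisymm
  · apply sInf_le
    exact ⟨2, by norm_num, SRTwo.srleq_two (LaurentPolynomial K)⟩
  · apply le_sInf
    rintro cc ⟨n, rfl, hn⟩
    by_contra hlt
    push_neg at hlt
    have hn2 : n < 2 := by exact_mod_cast hlt
    have h1 : (n : ℕ) ≤ 1 := by omega
    have hred := hn 1 h1 ![Polynomial.toLaurent (SRTwo.pp K), Polynomial.toLaurent (SRTwo.qq K)]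
      (SRTwo.unimodular_pair K)
    exact SRTwo.not_reducible K hred
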